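/- arXiv:2409.14503 — 6 statements merged into one kernel-verified Lean document; each statement's English description precedes it below -/
import Mathlib

section
/- Let U and V be real inner product spaces of the same finite dimension n ≥ 1, and let T : U → V be a linear map. If ‖T‖_tr = n · ‖T‖ (where ‖T‖ is the operator norm), then T is a homothety: ⟨T u, T v⟩ = ‖T‖² · ⟨u, v⟩ for all u, v ∈ U; in particular ‖T u‖ = ‖T‖ · ‖u‖ for every u ∈ U. -/
open scoped RealInnerProductSpace

/-- The trace norm of a linear map `T : U → V`: the supremum over all orthonormal
bases `(u_i)` of `U` and `(v_i)` of `V` of `∑ i, |⟪T u_i, v_i⟫|`. -/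
noncomputable def traceNorm {U V : Type*} [NormedAddCommGroup U] [InnerProductSpace ℝ U]
    [NormedAddCommGroup V] [InnerProductSpace ℝ V] (n : ℕ) (T : U →ₗ[ℝ] V) : ℝ :=
  ⨆ b : OrthonormalBasis (Fin n) ℝ U, ⨆ c : OrthonormalBasis (Fin n) ℝ V,
    ∑ i, |⟪T (b i), c i⟫|

section Aux

variable {U V : Type*} [NormedAddCommGroup U] [InnerProductSpace ℝ U]
    [NormedAddCommGroup V] [InnerProductSpace ℝ V]
    [FiniteDimensional ℝ U] [FiniteDimensional ℝ V]

/-- Parseval for a real orthonormal basis. -/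
lemma parseval_sq {n : ℕ} (c : OrthonormalBasis (Fin n) ℝ V) (x : V) :
    ‖x‖ ^ 2 = ∑ j, ⟪x, c j⟫ ^ 2 := by
  have := c.sum_inner_mul_inner x x
  rw [real_inner_self_eq_norm_sq] at this
  rw [← this]
  refine Finset.sum_congr rfl fun j _ => ?_
  rw [real_inner_comm x (c j), sq]

/-- The Hilbert–Schmidt quantity `∑ ‖T (b i)‖²` is independent of the orthonormal basis. -/
lemma hs_indep {n : ℕ} (T : U →ₗ[ℝ] V) (b : OrthonormalBasis (Fin n) ℝ U)
    (c : OrthonormalBasis (Fin n) ℝ V) :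
    ∑ i, ‖T (b i)‖ ^ 2 = ∑ j, ‖LinearMap.adjoint T (c j)‖ ^ 2 := by
  have h1 : ∑ i, ‖T (b i)‖ ^ 2 = ∑ i, ∑ j, ⟪T (b i), c j⟫ ^ 2 :=
    Finset.sum_congr rfl fun i _ => parseval_sq c (T (b i))
  have h2 : ∑ j, ‖LinearMap.adjoint T (c j)‖ ^ 2
      = ∑ j, ∑ i, ⟪LinearMap.adjoint T (c j), b i⟫ ^ 2 :=
    Finset.sum_congr rfl fun j _ => parseval_sq b (LinearMap.adjoint T (c j))
  rw [h1, h2, Finset.sum_comm]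
  refine Finset.sum_congr rfl fun j _ => Finset.sum_congr rfl fun i _ => ?_
  rw [LinearMap.adjoint_inner_left, real_inner_comm]

end Aux

/-- If the trace norm of `T` equals `n` times its operator norm, then `T` is a
homothety: `⟪T u, T v⟫ = ‖T‖² ⟪u, v⟫` for all `u, v`; in particular
`‖T u‖ = ‖T‖ ‖u‖` for every `u`. -/
theorem homothety_of_traceNorm_eq_dim_mul_opNorm {U V : Type*}
    [NormedAddCommGroup U] [InnerProductSpace ℝ U]
    [NormedAddCommGroup V] [InnerProductSpace ℝ V]
    [FiniteDimensional ℝ U] [FiniteDimensional ℝ V]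
    (n : ℕ) (hn : 1 ≤ n) (hU : Module.finrank ℝ U = n) (hV : Module.finrank ℝ V = n)
    (T : U →ₗ[ℝ] V)
    (h : traceNorm n T = n * ‖LinearMap.toContinuousLinearMap T‖) :
    (∀ u v : U, ⟪T u, T v⟫ = ‖LinearMap.toContinuousLinearMap T‖ ^ 2 * ⟪u, v⟫) ∧
      ∀ u : U, ‖T u‖ = ‖LinearMap.toContinuousLinearMap T‖ * ‖u‖ := by
  set M := ‖LinearMap.toContinuousLinearMap T‖ with hM
  have hM0 : 0 ≤ M := norm_nonneg _
  -- basic bound ‖T x‖ ≤ M ‖x‖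
  have hTle : ∀ x : U, ‖T x‖ ≤ M * ‖x‖ := fun x =>
    (LinearMap.toContinuousLinearMap T).le_opNorm x
  -- fixed orthonormal bases
  have hUcard : Module.finrank ℝ U = Fintype.card (Fin n) := by simpa using hU
  have hVcard : Module.finrank ℝ V = Fintype.card (Fin n) := by simpa using hV
  let b₀ : OrthonormalBasis (Fin n) ℝ U :=
    (stdOrthonormalBasis ℝ U).reindex (finCongr hU)
  let c₀ : OrthonormalBasis (Fin n) ℝ V :=
    (stdOrthonormalBasis ℝ V).reindex (finCongr hV)
  have hne1 : Nonempty (OrthonormalBasis (Fin n) ℝ U) := ⟨b₀⟩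
  have hne2 : Nonempty (OrthonormalBasis (Fin n) ℝ V) := ⟨c₀⟩
  set C : ℝ := ∑ j, ‖LinearMap.adjoint T (c₀ j)‖ ^ 2 with hC
  have hC0 : 0 ≤ C := Finset.sum_nonneg fun j _ => sq_nonneg _
  -- every ONB b of U satisfies ∑ ‖T (b i)‖² = C
  have hCb : ∀ b : OrthonormalBasis (Fin n) ℝ U, ∑ i, ‖T (b i)‖ ^ 2 = C :=
    fun b => hs_indep T b c₀
  -- upper bound on trace norm
  have key : traceNorm n T ≤ Real.sqrt (n * C) := by
    refine ciSup_le fun b => ciSup_le fun c => ?_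
    have h1 : ∑ i, |⟪T (b i), c i⟫| ≤ ∑ i, ‖T (b i)‖ := by
      refine Finset.sum_le_sum fun i _ => ?_
      calc |⟪T (b i), c i⟫| ≤ ‖T (b i)‖ * ‖c i‖ := abs_real_inner_le_norm _ _
        _ = ‖T (b i)‖ := by rw [c.orthonormal.1 i, mul_one]
    have h2 : (∑ i, ‖T (b i)‖) ^ 2 ≤ n * C := by
      have := sq_sum_le_card_mul_sum_sq (s := Finset.univ) (f := fun i => ‖T (b i)‖)
      simpa [hCb b] using this
    have h3 : ∑ i, ‖T (b i)‖ ≤ Real.sqrt (n * C) := by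
      have h4 : 0 ≤ ∑ i, ‖T (b i)‖ := Finset.sum_nonneg fun i _ => norm_nonneg _
      nlinarith [Real.sq_sqrt (by positivity : (0:ℝ) ≤ (n:ℝ) * C),
        Real.sqrt_nonneg ((n:ℝ) * C)]
    linarith
  -- hence n² M² ≤ n C, so n M² ≤ C
  have hnpos : (0:ℝ) < n := by exact_mod_cast hn
  have hnMC : (n : ℝ) * M ^ 2 ≤ C := by
    have h5 : (n : ℝ) * M ≤ Real.sqrt (n * C) := by rw [← h]; exact key
    have h6 : ((n : ℝ) * M) * ((n : ℝ) * M) ≤ Real.sqrt (n * C) * Real.sqrt (n * C) :=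
      mul_self_le_mul_self (by positivity) h5
    rw [Real.mul_self_sqrt (by positivity)] at h6
    nlinarith
  -- each basis vector has ‖T (b i)‖² = M²
  have hEach : ∀ (b : OrthonormalBasis (Fin n) ℝ U) (i : Fin n), ‖T (b i)‖ = M := by
    intro b i
    have hle : ∀ j : Fin n, ‖T (b j)‖ ≤ M := fun j => by
      have := hTle (b j); rwa [b.orthonormal.1 j, mul_one] at this
    have hsum : ∑ j, ‖T (b j)‖ ^ 2 = C := hCb b
    have hzero : ∑ j, (M ^ 2 - ‖T (b j)‖ ^ 2) = 0 := by
      have hup : ∑ j, (M ^ 2 - ‖T (b j)‖ ^ 2) ≤ 0 := by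
        rw [Finset.sum_sub_distrib, hsum]
        simp only [Finset.sum_const, Finset.card_univ, Fintype.card_fin, nsmul_eq_mul]
        linarith
      have hdn : 0 ≤ ∑ j, (M ^ 2 - ‖T (b j)‖ ^ 2) :=
        Finset.sum_nonneg fun j _ => by nlinarith [hle j, norm_nonneg (T (b j)), hM0]
      linarith
    have := (Finset.sum_eq_zero_iff_of_nonneg (fun j _ => by
      nlinarith [hle j, norm_nonneg (T (b j)), hM0])).mp hzero i (Finset.mem_univ i)
    nlinarith [norm_nonneg (T (b i)), hM0]
  -- unit vectors
  have hUnit : ∀ u : U, ‖u‖ = 1 → ‖T u‖ = M := by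
    intro u hu1
    have hn0 : 0 < n := hn
    set i0 : Fin n := ⟨0, hn0⟩ with hi0
    have horth : Orthonormal ℝ (({i0} : Set (Fin n)).restrict (fun _ : Fin n => u)) := by
      constructor
      · intro i; exact hu1
      · intro i j hij
        exact absurd (Subtype.ext ((i.2 : i.1 ∈ ({i0} : Set (Fin n))).trans
          (j.2 : j.1 ∈ ({i0} : Set (Fin n))).symm)) hij
    obtain ⟨b, hb⟩ := horth.exists_orthonormalBasis_extension_of_card_eq hUcard
    have h0 : b i0 = u := hb i0 rfl
    rw [← h0]; exact hEach b i0
  -- the second conclusion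
  have hNorm : ∀ u : U, ‖T u‖ = M * ‖u‖ := by
    intro u
    rcases eq_or_ne u 0 with rfl | hu
    · simp
    · have hu0 : ‖u‖ ≠ 0 := norm_ne_zero_iff.mpr hu
      have := hUnit (‖u‖⁻¹ • u) (by rw [norm_smul]; simp [abs_of_nonneg, inv_mul_cancel₀ hu0])
      rw [map_smul, norm_smul] at this
      simp only [norm_inv, norm_norm] at this
      field_simp at this ⊢
      linarith
  refine ⟨fun u v => ?_, hNorm⟩
  have h1 := real_inner_eq_norm_add_mul_self_sub_norm_mul_self_sub_norm_mul_self_div_two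
    (T u) (T v)
  have h2 := real_inner_eq_norm_add_mul_self_sub_norm_mul_self_sub_norm_mul_self_div_two u v
  have hadd : T u + T v = T (u + v) := (map_add T u v).symm
  rw [h1, h2, hadd, hNorm, hNorm, hNorm]
  ring
end

section
/- Let U and V be real inner product spaces of the same finite dimension n ≥ 1, and let T : U → V be a linear map with ‖T x‖ ≤ ‖x‖ for all x ∈ U. If ‖T‖_tr = n, then T is a linear isometry, i.e. ‖T u‖ = ‖u‖ for every u ∈ U (equivalently ⟨T u, T v⟩ = ⟨u, v⟩ for all u, v ∈ U). -/
open scoped RealInnerProductSpace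

/-- If `T` is norm non-increasing and its trace norm equals `n`, then `T` is a
linear isometry: `‖T u‖ = ‖u‖` for all `u`, equivalently `⟪T u, T v⟫ = ⟪u, v⟫`. -/
theorem isometry_of_traceNorm_eq_dim {U V : Type*}
    [NormedAddCommGroup U] [InnerProductSpace ℝ U]
    [NormedAddCommGroup V] [InnerProductSpace ℝ V]
    [FiniteDimensional ℝ U] [FiniteDimensional ℝ V]
    (n : ℕ) (hn : 1 ≤ n) (hU : Module.finrank ℝ U = n) (hV : Module.finrank ℝ V = n)
    (T : U →ₗ[ℝ] V)
    (hcontr : ∀ x : U, ‖T x‖ ≤ ‖x‖)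
    (h : traceNorm n T = n) :
    (∀ u : U, ‖T u‖ = ‖u‖) ∧ ∀ u v : U, ⟪T u, T v⟫ = ⟪u, v⟫ := by
  have b₀ : OrthonormalBasis (Fin n) ℝ U := (stdOrthonormalBasis ℝ U).reindex (finCongr hU)
  have c₀ : OrthonormalBasis (Fin n) ℝ V := (stdOrthonormalBasis ℝ V).reindex (finCongr hV)
  haveI : Nonempty (OrthonormalBasis (Fin n) ℝ U) := ⟨b₀⟩
  haveI : Nonempty (OrthonormalBasis (Fin n) ℝ V) := ⟨c₀⟩
  set S : ℝ := ∑ j, ‖LinearMap.adjoint T (c₀ j)‖ ^ 2 with hSdef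
  -- basis independence of the Hilbert-Schmidt sum
  have hS : ∀ b : OrthonormalBasis (Fin n) ℝ U, ∑ i, ‖T (b i)‖ ^ 2 = S := by
    intro b
    have : ∀ i, ‖T (b i)‖ ^ 2 = ∑ j, ⟪T (b i), c₀ j⟫ * ⟪c₀ j, T (b i)⟫ := by
      intro i
      rw [c₀.sum_inner_mul_inner, real_inner_self_eq_norm_sq]
    simp_rw [this]
    rw [Finset.sum_comm]
    refine Finset.sum_congr rfl fun j _ => ?_
    have : ∀ i, ⟪T (b i), c₀ j⟫ * ⟪c₀ j, T (b i)⟫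
        = ⟪LinearMap.adjoint T (c₀ j), b i⟫ * ⟪b i, LinearMap.adjoint T (c₀ j)⟫ := by
      intro i
      rw [LinearMap.adjoint_inner_left, LinearMap.adjoint_inner_right]
      ring
    simp_rw [this]
    rw [b.sum_inner_mul_inner, real_inner_self_eq_norm_sq]
  -- each basis vector image has norm ≤ 1
  have hnorm1 : ∀ (b : OrthonormalBasis (Fin n) ℝ U) (i : Fin n), ‖T (b i)‖ ≤ 1 := by
    intro b i
    calc ‖T (b i)‖ ≤ ‖b i‖ := hcontr _
    _ = 1 := b.orthonormal.1 i
  -- the key bound on each trace-norm summand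
  have hbound : ∀ (b : OrthonormalBasis (Fin n) ℝ U) (c : OrthonormalBasis (Fin n) ℝ V),
      ∑ i, |⟪T (b i), c i⟫| ≤ (n : ℝ) / 2 + S / 2 := by
    intro b c
    have h1 : ∑ i, |⟪T (b i), c i⟫| ≤ ∑ i, (1 + ‖T (b i)‖ ^ 2) / 2 := by
      apply Finset.sum_le_sum
      intro i _
      have h2 : |⟪T (b i), c i⟫| ≤ ‖T (b i)‖ * ‖c i‖ := abs_real_inner_le_norm _ _
      rw [c.orthonormal.1 i, mul_one] at h2
      nlinarith [sq_nonneg (‖T (b i)‖ - 1)]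
    calc ∑ i, |⟪T (b i), c i⟫| ≤ ∑ i, (1 + ‖T (b i)‖ ^ 2) / 2 := h1
    _ = (n : ℝ) / 2 + (∑ i, ‖T (b i)‖ ^ 2) / 2 := by
        rw [eq_comm]
        calc (n : ℝ) / 2 + (∑ i, ‖T (b i)‖ ^ 2) / 2
            = (∑ _i : Fin n, (1 : ℝ)) / 2 + (∑ i, ‖T (b i)‖ ^ 2) / 2 := by simp
          _ = ∑ i, (1 + ‖T (b i)‖ ^ 2) / 2 := by
              rw [← add_div, ← Finset.sum_add_distrib, Finset.sum_div]
    _ = (n : ℝ) / 2 + S / 2 := by rw [hS b]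
  have hsup : traceNorm n T ≤ (n : ℝ) / 2 + S / 2 := by
    rw [traceNorm]
    exact ciSup_le fun b => ciSup_le fun c => hbound b c
  rw [h] at hsup
  have hSn : (n : ℝ) ≤ S := by linarith
  -- every unit vector has image of norm 1
  have hunit : ∀ u : U, ‖u‖ = 1 → ‖T u‖ = 1 := by
    intro u hu
    have hcard : Module.finrank ℝ U = Fintype.card (Fin n) := by simpa using hU
    have horth : Orthonormal ℝ (Set.restrict {(⟨0, hn⟩ : Fin n)} (fun _ : Fin n => u)) := by
      constructor
      · intro i
        exact hu
      · intro i j hij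
        exact absurd (Subsingleton.elim i j) hij
    obtain ⟨b, hb⟩ := horth.exists_orthonormalBasis_extension_of_card_eq hcard
    have hbu : b ⟨0, hn⟩ = u := hb _ rfl
    have hsum : ∑ i, ‖T (b i)‖ ^ 2 = S := hS b
    have hle : ∀ i : Fin n, ‖T (b i)‖ ^ 2 ≤ 1 := by
      intro i
      have := hnorm1 b i
      nlinarith [norm_nonneg (T (b i))]
    -- each term must equal 1
    have hsum_le : S ≤ (n : ℝ) := by
      rw [← hsum]
      calc ∑ i, ‖T (b i)‖ ^ 2 ≤ ∑ _i : Fin n, (1 : ℝ) := Finset.sum_le_sum fun i _ => hle i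
      _ = n := by simp
    have hSeq : S = (n : ℝ) := le_antisymm hsum_le hSn
    have heach : ∀ i ∈ Finset.univ, ‖T (b i)‖ ^ 2 = 1 := by
      apply Finset.sum_eq_sum_iff_of_le (fun i _ => hle i) |>.mp
      rw [hsum, hSeq]; simp
    have := heach ⟨0, hn⟩ (Finset.mem_univ _)
    rw [hbu] at this
    nlinarith [norm_nonneg (T u)]
  have hiso : ∀ u : U, ‖T u‖ = ‖u‖ := by
    intro u
    rcases eq_or_ne u 0 with rfl | hu
    · simp
    · have hnu : ‖u‖ ≠ 0 := norm_ne_zero_iff.mpr hu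
      have h1 : ‖(‖u‖⁻¹ • u : U)‖ = 1 := by
        rw [norm_smul, norm_inv, norm_norm, inv_mul_cancel₀ hnu]
      have h2 := hunit _ h1
      rw [map_smul, norm_smul, norm_inv, norm_norm] at h2
      field_simp at h2
      rw [h2]
  refine ⟨hiso, fun u v => ?_⟩
  rw [real_inner_eq_norm_add_mul_self_sub_norm_mul_self_sub_norm_mul_self_div_two,
    real_inner_eq_norm_add_mul_self_sub_norm_mul_self_sub_norm_mul_self_div_two (x := u)]
  rw [← map_add, hiso, hiso, hiso]
end

section
/- Let U and V be oriented real inner product spaces of the same finite dimension n ≥ 2, and let T : U → V be a linear map that is not invertible. Then [T]_tr = ‖T‖_tr. -/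
open scoped RealInnerProductSpace

lemma exists_flip {E : Type*} [NormedAddCommGroup E] [InnerProductSpace ℝ E]
    {n : ℕ} (e : OrthonormalBasis (Fin n) ℝ E) (i₀ : Fin n) :
    ∃ e' : OrthonormalBasis (Fin n) ℝ E,
      e'.toBasis.orientation = -e.toBasis.orientation ∧ e' i₀ = -(e i₀) ∧
      ∀ i, i ≠ i₀ → e' i = e i := by
  set w : Fin n → ℝˣ := Function.update 1 i₀ (-1) with hw
  have hwval : ∀ i, (w i : ℝ) = if i = i₀ then -1 else 1 := by
    intro i
    by_cases h : i = i₀ <;> simp [hw, h, Function.update]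
  set B := e.toBasis.unitsSMul w with hB
  have hBapp : ∀ i, B i = (if i = i₀ then -1 else 1 : ℝ) • e i := by
    intro i
    rw [hB, Module.Basis.unitsSMul_apply, Units.smul_def, hwval, OrthonormalBasis.coe_toBasis]
  have horth : Orthonormal ℝ (⇑B) := by
    rw [orthonormal_iff_ite]
    intro i j
    have he := orthonormal_iff_ite.mp e.orthonormal i j
    rw [hBapp i, hBapp j, real_inner_smul_left, real_inner_smul_right, he]
    by_cases hij : i = j
    · subst hij
      by_cases hi : i = i₀ <;> simp [hi]
    · simp [hij]
  refine ⟨B.toOrthonormalBasis horth, ?_, ?_, ?_⟩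
  · rw [B.toBasis_toOrthonormalBasis horth, hB, Module.Basis.orientation_neg_single]
  · rw [Module.Basis.coe_toOrthonormalBasis, hBapp]
    simp
  · intro i hi
    rw [Module.Basis.coe_toOrthonormalBasis, hBapp]
    simp [hi]

/-- The oriented trace of a linear map `T : U → V` between oriented inner product
spaces: the supremum over all positively oriented orthonormal bases `(u_i)` of `U`
and `(v_i)` of `V` of `∑ i, ⟪T u_i, v_i⟫`. -/
noncomputable def orientedTrace {U V : Type*} [NormedAddCommGroup U] [InnerProductSpace ℝ U]
    [NormedAddCommGroup V] [InnerProductSpace ℝ V] (n : ℕ)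
    (oU : Orientation ℝ U (Fin n)) (oV : Orientation ℝ V (Fin n)) (T : U →ₗ[ℝ] V) : ℝ :=
  ⨆ b : {b : OrthonormalBasis (Fin n) ℝ U // b.toBasis.orientation = oU},
  ⨆ c : {c : OrthonormalBasis (Fin n) ℝ V // c.toBasis.orientation = oV},
    ∑ i, ⟪T (b.val i), c.val i⟫

/-- If `T` is not invertible, then its oriented trace equals its trace norm. -/
theorem orientedTrace_eq_traceNorm_of_not_bijective {U V : Type*}
    [NormedAddCommGroup U] [InnerProductSpace ℝ U]
    [NormedAddCommGroup V] [InnerProductSpace ℝ V]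
    [FiniteDimensional ℝ U] [FiniteDimensional ℝ V]
    (n : ℕ) (hn : 2 ≤ n) (hU : Module.finrank ℝ U = n) (hV : Module.finrank ℝ V = n)
    (oU : Orientation ℝ U (Fin n)) (oV : Orientation ℝ V (Fin n)) (T : U →ₗ[ℝ] V)
    (hT : ¬ Function.Bijective T) :
    orientedTrace n oU oV T = traceNorm n T := by
  haveI : Fact (1 ≤ n) := ⟨le_trans one_le_two hn⟩
  haveI : Nonempty (Fin n) := ⟨⟨0, by omega⟩⟩
  -- the symmetric operator T† T
  set P : U →ₗ[ℝ] U := LinearMap.adjoint T ∘ₗ T with hP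
  have hPsym : P.IsSymmetric := by
    intro x y
    rw [hP, LinearMap.comp_apply, LinearMap.comp_apply, LinearMap.adjoint_inner_left,
      LinearMap.adjoint_inner_right]
  set b : OrthonormalBasis (Fin n) ℝ U := hPsym.eigenvectorBasis hU with hb
  set μ : Fin n → ℝ := hPsym.eigenvalues hU with hμ
  have hbb : ∀ i j, ⟪b i, b j⟫ = if i = j then 1 else 0 := orthonormal_iff_ite.mp b.orthonormal
  have hTT : ∀ i j, ⟪T (b i), T (b j)⟫ = μ i * (if i = j then 1 else 0) := by
    intro i j
    have happ : P (b i) = μ i • b i := by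
      exact_mod_cast hPsym.apply_eigenvectorBasis hU i
    calc ⟪T (b i), T (b j)⟫ = ⟪LinearMap.adjoint T (T (b i)), b j⟫ :=
          (LinearMap.adjoint_inner_left T (b j) (T (b i))).symm
      _ = ⟪μ i • b i, b j⟫ := by
          rw [show LinearMap.adjoint T (T (b i)) = P (b i) from rfl, happ]
      _ = μ i * ⟪b i, b j⟫ := real_inner_smul_left _ _ _
      _ = μ i * (if i = j then 1 else 0) := by rw [hbb]
  have hμnn : ∀ i, 0 ≤ μ i := by
    intro i
    have h := hTT i i
    simp at h
    rw [← h]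
    positivity
  set σ : Fin n → ℝ := fun i => Real.sqrt (μ i) with hσ
  have hσnn : ∀ i, 0 ≤ σ i := fun i => Real.sqrt_nonneg _
  have hσsq : ∀ i, σ i * σ i = μ i := fun i => Real.mul_self_sqrt (hμnn i)
  -- the orthonormal family on the support of σ, extended to a basis of V
  have hcard : Module.finrank ℝ V = Fintype.card (Fin n) := by simp [hV]
  obtain ⟨c, hc⟩ : ∃ c : OrthonormalBasis (Fin n) ℝ V,
      ∀ i ∈ {i | σ i ≠ 0}, c i = (σ i)⁻¹ • T (b i) := by
    apply Orthonormal.exists_orthonormalBasis_extension_of_card_eq hcard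
    rw [orthonormal_iff_ite]
    rintro ⟨i, hi⟩ ⟨j, hj⟩
    simp only [Set.restrict_apply]
    rw [real_inner_smul_left, real_inner_smul_right, hTT i j]
    have hi' : σ i ≠ 0 := hi
    by_cases hij : i = j
    · subst hij
      simp only [if_pos rfl, mul_one, Subtype.ext_iff, if_pos rfl]
      rw [← hσsq i]
      field_simp
    · simp [hij, Subtype.ext_iff]
  have hσ0c : ∀ i, σ i = 0 → T (b i) = 0 := by
    intro i h0
    have : ⟪T (b i), T (b i)⟫ = 0 := by
      rw [hTT i i, ← hσsq i, h0]
      ring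
    exact inner_self_eq_zero.mp this
  have hTb : ∀ i, T (b i) = σ i • c i := by
    intro i
    by_cases h0 : σ i = 0
    · rw [hσ0c i h0, h0, zero_smul]
    · rw [hc i h0, smul_smul, mul_inv_cancel₀ h0, one_smul]
  -- expansion of T
  have hform : ∀ p : U, T p = ∑ j, (σ j * ⟪b j, p⟫) • c j := by
    intro p
    conv_lhs => rw [← b.sum_repr p]
    rw [map_sum]
    refine Finset.sum_congr rfl fun j _ => ?_
    rw [map_smul, hTb j, b.repr_apply_apply, smul_smul, mul_comm]
  have hcc : ∀ i j, ⟪c i, c j⟫ = if i = j then 1 else 0 := orthonormal_iff_ite.mp c.orthonormal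
  have hinner : ∀ (p : U) (q : V), ⟪T p, q⟫ = ∑ j, σ j * ⟪b j, p⟫ * ⟪c j, q⟫ := by
    intro p q
    rw [hform p, sum_inner]
    refine Finset.sum_congr rfl fun j _ => ?_
    rw [real_inner_smul_left]
  set S : ℝ := ∑ i, σ i with hS
  -- upper bound for the trace norm sums
  have hub : ∀ (p : OrthonormalBasis (Fin n) ℝ U) (q : OrthonormalBasis (Fin n) ℝ V),
      ∑ i, |⟪T (p i), q i⟫| ≤ S := by
    intro p q
    have key : ∀ i, |⟪T (p i), q i⟫| ≤ ∑ j, σ j * (⟪b j, p i⟫ ^ 2 + ⟪c j, q i⟫ ^ 2) / 2 := by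
      intro i
      rw [hinner]
      refine le_trans (Finset.abs_sum_le_sum_abs _ _) (Finset.sum_le_sum fun j _ => ?_)
      have h1 : |σ j * ⟪b j, p i⟫ * ⟪c j, q i⟫| = σ j * (|⟪b j, p i⟫| * |⟪c j, q i⟫|) := by
        rw [abs_mul, abs_mul, abs_of_nonneg (hσnn j), mul_assoc]
      rw [h1]
      have h2 : |⟪b j, p i⟫| * |⟪c j, q i⟫| ≤ (⟪b j, p i⟫ ^ 2 + ⟪c j, q i⟫ ^ 2) / 2 := by
        nlinarith [sq_nonneg (|⟪b j, p i⟫| - |⟪c j, q i⟫|), sq_abs ⟪b j, p i⟫,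
          sq_abs ⟪c j, q i⟫]
      calc σ j * (|⟪b j, p i⟫| * |⟪c j, q i⟫|)
          ≤ σ j * ((⟪b j, p i⟫ ^ 2 + ⟪c j, q i⟫ ^ 2) / 2) :=
            mul_le_mul_of_nonneg_left h2 (hσnn j)
        _ = σ j * (⟪b j, p i⟫ ^ 2 + ⟪c j, q i⟫ ^ 2) / 2 := by ring
    refine le_trans (Finset.sum_le_sum fun i _ => key i) ?_
    rw [Finset.sum_comm]
    have parseval1 : ∀ j, ∑ i, ⟪b j, p i⟫ ^ 2 = 1 := by
      intro j
      have h := p.sum_inner_mul_inner (b j) (b j)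
      rw [real_inner_self_eq_norm_sq, b.orthonormal.1 j, one_pow] at h
      rw [← h]
      refine Finset.sum_congr rfl fun i _ => ?_
      rw [sq, real_inner_comm (p i) (b j)]
    have parseval2 : ∀ j, ∑ i, ⟪c j, q i⟫ ^ 2 = 1 := by
      intro j
      have h := q.sum_inner_mul_inner (c j) (c j)
      rw [real_inner_self_eq_norm_sq, c.orthonormal.1 j, one_pow] at h
      rw [← h]
      refine Finset.sum_congr rfl fun i _ => ?_
      rw [sq, real_inner_comm (q i) (c j)]
    refine le_of_eq (Finset.sum_congr rfl fun j _ => ?_)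
    have : ∑ i, σ j * (⟪b j, p i⟫ ^ 2 + ⟪c j, q i⟫ ^ 2) / 2
        = σ j / 2 * (∑ i, ⟪b j, p i⟫ ^ 2 + ∑ i, ⟪c j, q i⟫ ^ 2) := by
      rw [← Finset.sum_add_distrib, Finset.mul_sum]
      refine Finset.sum_congr rfl fun i _ => ?_
      ring
    rw [this, parseval1 j, parseval2 j]
    ring
  -- existence of a zero singular value
  obtain ⟨i₀, hi₀⟩ : ∃ i₀, σ i₀ = 0 := by
    have hninj : ¬ Function.Injective T := by
      intro hinj
      exact hT ⟨hinj,
        (LinearMap.injective_iff_surjective_of_finrank_eq_finrank (hU.trans hV.symm)).mp hinj⟩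
    rw [← LinearMap.ker_eq_bot] at hninj
    obtain ⟨x, hxmem, hx0⟩ := Submodule.exists_mem_ne_zero_of_ne_bot hninj
    have hTx : T x = 0 := hxmem
    obtain ⟨k, hk⟩ : ∃ k, ⟪b k, x⟫ ≠ 0 := by
      by_contra h
      push_neg at h
      apply hx0
      rw [← b.sum_repr x]
      refine Finset.sum_eq_zero fun i _ => ?_
      rw [b.repr_apply_apply, h i, zero_smul]
    have h0 : (0 : ℝ) = σ k * ⟪b k, x⟫ := by
      have := hinner x (c k)
      rw [hTx, inner_zero_left] at this
      rw [this]
      rw [Finset.sum_eq_single k]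
      · rw [hcc k k, if_pos rfl, mul_one]
      · intro j _ hj
        rw [hcc j k, if_neg hj]
        ring
      · intro h
        exact absurd (Finset.mem_univ k) h
    refine ⟨k, ?_⟩
    rcases mul_eq_zero.mp h0.symm with h | h
    · exact h
    · exact absurd h hk
  have hTbi₀ : T (b i₀) = 0 := hσ0c i₀ hi₀
  -- positively oriented bases achieving S
  obtain ⟨b', hb'o, hb'⟩ : ∃ b' : OrthonormalBasis (Fin n) ℝ U,
      b'.toBasis.orientation = oU ∧ ∀ i, T (b' i) = σ i • c i := by
    rcases b.toBasis.orientation_eq_or_eq_neg oU with h | h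
    · exact ⟨b, h.symm, hTb⟩
    · obtain ⟨b', h1, h2, h3⟩ := exists_flip b i₀
      refine ⟨b', by rw [h1, ← h], fun i => ?_⟩
      by_cases hii : i = i₀
      · subst hii
        rw [h2, map_neg, hTbi₀, hi₀, neg_zero, zero_smul]
      · rw [h3 i hii, hTb i]
  obtain ⟨c', hc'o, hc'⟩ : ∃ c' : OrthonormalBasis (Fin n) ℝ V,
      c'.toBasis.orientation = oV ∧ ∀ i, ⟪σ i • c i, c' i⟫ = σ i := by
    rcases c.toBasis.orientation_eq_or_eq_neg oV with h | h
    · refine ⟨c, h.symm, fun i => ?_⟩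
      rw [real_inner_smul_left, hcc i i, if_pos rfl, mul_one]
    · obtain ⟨c', h1, h2, h3⟩ := exists_flip c i₀
      refine ⟨c', by rw [h1, ← h], fun i => ?_⟩
      by_cases hii : i = i₀
      · subst hii
        rw [hi₀, zero_smul, inner_zero_left]
      · rw [h3 i hii, real_inner_smul_left, hcc i i, if_pos rfl, mul_one]
  have hSval : ∑ i, ⟪T (b' i), c' i⟫ = S := by
    refine Finset.sum_congr rfl fun i _ => ?_
    rw [hb' i, hc' i]
  -- nonemptiness
  haveI hne1 : Nonempty (OrthonormalBasis (Fin n) ℝ U) := ⟨b⟩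
  haveI hne2 : Nonempty (OrthonormalBasis (Fin n) ℝ V) := ⟨c⟩
  haveI hne3 : Nonempty {e : OrthonormalBasis (Fin n) ℝ U // e.toBasis.orientation = oU} :=
    ⟨⟨b', hb'o⟩⟩
  haveI hne4 : Nonempty {e : OrthonormalBasis (Fin n) ℝ V // e.toBasis.orientation = oV} :=
    ⟨⟨c', hc'o⟩⟩
  -- oriented sums are bounded by S as well
  have hub' : ∀ (p : OrthonormalBasis (Fin n) ℝ U) (q : OrthonormalBasis (Fin n) ℝ V),
      ∑ i, ⟪T (p i), q i⟫ ≤ S :=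
    fun p q => le_trans (Finset.sum_le_sum fun i _ => le_abs_self _) (hub p q)
  have htn_le : traceNorm n T ≤ S := by
    rw [traceNorm]
    exact ciSup_le fun p => ciSup_le fun q => hub p q
  have hot_le : orientedTrace n oU oV T ≤ traceNorm n T := by
    rw [orientedTrace, traceNorm]
    refine ciSup_le fun p => ciSup_le fun q => ?_
    calc ∑ i, ⟪T (p.val i), q.val i⟫
        ≤ ∑ i, |⟪T (p.val i), q.val i⟫| := Finset.sum_le_sum fun i _ => le_abs_self _
      _ ≤ ⨆ q' : OrthonormalBasis (Fin n) ℝ V, ∑ i, |⟪T (p.val i), q' i⟫| :=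
          le_ciSup (f := fun q' : OrthonormalBasis (Fin n) ℝ V =>
            ∑ i, |⟪T (p.val i), q' i⟫|)
            ⟨S, by rintro x ⟨q', rfl⟩; exact hub p.val q'⟩ q.val
      _ ≤ ⨆ p' : OrthonormalBasis (Fin n) ℝ U, ⨆ q' : OrthonormalBasis (Fin n) ℝ V,
            ∑ i, |⟪T (p' i), q' i⟫| :=
          le_ciSup (f := fun p' : OrthonormalBasis (Fin n) ℝ U =>
            ⨆ q' : OrthonormalBasis (Fin n) ℝ V, ∑ i, |⟪T (p' i), q' i⟫|)
            ⟨S, by rintro x ⟨p', rfl⟩; exact ciSup_le fun q' => hub p' q'⟩ p.val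
  have hS_le : S ≤ orientedTrace n oU oV T := by
    rw [orientedTrace, ← hSval]
    calc ∑ i, ⟪T (b' i), c' i⟫
        ≤ ⨆ q' : {e : OrthonormalBasis (Fin n) ℝ V // e.toBasis.orientation = oV},
            ∑ i, ⟪T (b' i), q'.val i⟫ :=
          le_ciSup (f := fun q' : {e : OrthonormalBasis (Fin n) ℝ V //
              e.toBasis.orientation = oV} => ∑ i, ⟪T (b' i), q'.val i⟫)
            ⟨S, by rintro x ⟨q', rfl⟩; exact hub' b' q'.val⟩ ⟨c', hc'o⟩
      _ ≤ ⨆ p' : {e : OrthonormalBasis (Fin n) ℝ U // e.toBasis.orientation = oU},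
            ⨆ q' : {e : OrthonormalBasis (Fin n) ℝ V // e.toBasis.orientation = oV},
            ∑ i, ⟪T (p'.val i), q'.val i⟫ :=
          le_ciSup (f := fun p' : {e : OrthonormalBasis (Fin n) ℝ U //
              e.toBasis.orientation = oU} =>
              ⨆ q' : {e : OrthonormalBasis (Fin n) ℝ V // e.toBasis.orientation = oV},
              ∑ i, ⟪T (p'.val i), q'.val i⟫)
            ⟨S, by rintro x ⟨p', rfl⟩; exact ciSup_le fun q' => hub' p'.val q'.val⟩ ⟨b', hb'o⟩
  exact le_antisymm hot_le (le_trans htn_le hS_le)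
end

section
/- Let U and V be oriented real inner product spaces of the same finite dimension n ≥ 2, and let T : U → V be an invertible linear map with [T]_tr = ‖T‖_tr. Then T is orientation-preserving, i.e. T maps every positively oriented basis of U to a positively oriented basis of V. -/
open scoped RealInnerProductSpace
open Matrix
open Matrix

/-- Key matrix lemma: if `W` is orthogonal with negative determinant, then the
`σ`-weighted trace of `W` is at most `∑ σ - 2m` where `m` is a lower bound for `σ`. -/
lemma weighted_trace_bound {n : ℕ} (hn : 2 ≤ n) (W : Matrix (Fin n) (Fin n) ℝ)
    (hW : W * Wᵀ = 1) (hdet : W.det < 0) (σ : Fin n → ℝ) (m : ℝ) (hm : 0 ≤ m)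
    (hσ : ∀ i, m ≤ σ i) :
    ∑ i, σ i * W i i ≤ (∑ i, σ i) - 2 * m := by
  classical
  have hW' : Wᵀ * W = 1 := mul_eq_one_comm.mp hW
  -- rows are unit vectors
  have hrow : ∀ i, ∑ j, W i j ^ 2 = 1 := by
    intro i
    have := congrFun (congrFun hW i) i
    simpa [Matrix.mul_apply, Matrix.transpose_apply, Matrix.one_apply, sq] using this
  have hdiag : ∀ i, W i i ≤ 1 := by
    intro i
    have h1 : W i i ^ 2 ≤ 1 := by
      rw [← hrow i]
      exact Finset.single_le_sum (f := fun j => W i j ^ 2) (fun j _ => sq_nonneg _)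
        (Finset.mem_univ i)
    nlinarith [sq_nonneg (W i i - 1)]
  -- det (1 + W) = 0
  have hdet0 : (1 + W).det = 0 := by
    have h2 : Wᵀ * (1 + W) = (1 + W)ᵀ := by
      rw [Matrix.mul_add, Matrix.mul_one, hW', Matrix.transpose_add, Matrix.transpose_one,
        add_comm]
    have h3 := congrArg Matrix.det h2
    rw [Matrix.det_mul, Matrix.det_transpose, Matrix.det_transpose] at h3
    have h4 : (1 - W.det) * (1 + W).det = 0 := by ring_nf; linarith [h3]
    rcases mul_eq_zero.mp h4 with h | h
    · exfalso; linarith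
    · exact h
  obtain ⟨x, hx0, hx⟩ := Matrix.exists_mulVec_eq_zero_iff.mpr hdet0
  have hWx : W.mulVec x = -x := by
    have := hx
    rw [Matrix.add_mulVec, Matrix.one_mulVec] at this
    have := eq_neg_of_add_eq_zero_right this
    linear_combination (norm := module) this
  -- the Frobenius argument
  set S : Matrix (Fin n) (Fin n) ℝ := 1 - W with hS
  have hSx : ∀ i, ∑ j, S i j * x j = 2 * x i := by
    intro i
    have h5 := congrFun hWx i
    simp only [Matrix.mulVec, dotProduct, Pi.neg_apply] at h5
    have h6 : ∑ j, (1 : Matrix (Fin n) (Fin n) ℝ) i j * x j = x i := by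
      simp [Matrix.one_apply, Finset.sum_ite_eq]
    have h7 : ∑ j, S i j * x j = (∑ j, (1 : Matrix (Fin n) (Fin n) ℝ) i j * x j)
        - ∑ j, W i j * x j := by
      rw [← Finset.sum_sub_distrib]
      exact Finset.sum_congr rfl fun j _ => by simp [hS, Matrix.sub_apply]; ring
    rw [h7, h6, h5]; ring
  set t : ℝ := ∑ j, x j ^ 2 with ht
  have htpos : 0 < t := by
    obtain ⟨j, hj⟩ := Function.ne_iff.mp hx0
    have h6 : x j ^ 2 ≤ t := Finset.single_le_sum (f := fun k => x k ^ 2)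
      (fun k _ => sq_nonneg _) (Finset.mem_univ j)
    have : 0 < x j ^ 2 := by
      have := sub_ne_zero.mpr hj
      simp only [Pi.zero_apply] at hj
      positivity
    linarith
  have hCS : ∀ i, (2 * x i) ^ 2 ≤ (∑ j, S i j ^ 2) * t := by
    intro i
    rw [← hSx i]
    exact Finset.sum_mul_sq_le_sq_mul_sq Finset.univ _ _
  have hsum : 4 * t ≤ (∑ i, ∑ j, S i j ^ 2) * t := by
    have := Finset.sum_le_sum fun i (_ : i ∈ Finset.univ) => hCS i
    calc 4 * t = ∑ i, (2 * x i) ^ 2 := by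
          rw [Finset.mul_sum]; exact Finset.sum_congr rfl fun i _ => by ring
      _ ≤ ∑ i, (∑ j, S i j ^ 2) * t := this
      _ = (∑ i, ∑ j, S i j ^ 2) * t := by rw [Finset.sum_mul]
  have hF : 4 ≤ ∑ i, ∑ j, S i j ^ 2 := le_of_mul_le_mul_right (by linarith) htpos
  have hFeq : ∑ i, ∑ j, S i j ^ 2 = 2 * n - 2 * ∑ i, W i i := by
    have expand : ∀ i j, S i j ^ 2 =
        (1 : Matrix (Fin n) (Fin n) ℝ) i j ^ 2
          - 2 * ((1 : Matrix (Fin n) (Fin n) ℝ) i j * W i j) + W i j ^ 2 := by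
      intro i j; simp [hS, Matrix.sub_apply]; ring
    have h1 : ∀ i : Fin n, ∑ j, (1 : Matrix (Fin n) (Fin n) ℝ) i j ^ 2 = 1 := by
      intro i; simp [Matrix.one_apply, Finset.sum_ite_eq]
    have h2 : ∀ i : Fin n, ∑ j, (1 : Matrix (Fin n) (Fin n) ℝ) i j * W i j = W i i := by
      intro i; simp [Matrix.one_apply, Finset.sum_ite_eq]
    calc ∑ i, ∑ j, S i j ^ 2
        = ∑ i, ∑ j, ((1 : Matrix (Fin n) (Fin n) ℝ) i j ^ 2
          - 2 * ((1 : Matrix (Fin n) (Fin n) ℝ) i j * W i j) + W i j ^ 2) :=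
          Finset.sum_congr rfl fun i _ => Finset.sum_congr rfl fun j _ => expand i j
      _ = (∑ i, ∑ j, (1 : Matrix (Fin n) (Fin n) ℝ) i j ^ 2)
          - 2 * (∑ i, ∑ j, (1 : Matrix (Fin n) (Fin n) ℝ) i j * W i j)
          + ∑ i, ∑ j, W i j ^ 2 := by
          simp [Finset.sum_add_distrib, Finset.sum_sub_distrib, Finset.mul_sum]
      _ = 2 * n - 2 * ∑ i, W i i := by
          rw [Finset.sum_congr rfl fun i (_ : i ∈ Finset.univ) => h1 i,
            Finset.sum_congr rfl fun i (_ : i ∈ Finset.univ) => h2 i,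
            Finset.sum_congr rfl fun i (_ : i ∈ Finset.univ) => hrow i]
          simp [Finset.sum_const, Finset.card_univ]
          ring
  have htr : (∑ i, W i i) ≤ (n : ℝ) - 2 := by
    rw [hFeq] at hF; linarith
  -- final weighted estimate
  have key : 2 * m ≤ ∑ i, σ i * (1 - W i i) := by
    have step1 : ∑ i, m * (1 - W i i) ≤ ∑ i, σ i * (1 - W i i) :=
      Finset.sum_le_sum fun i _ =>
        mul_le_mul_of_nonneg_right (hσ i) (by linarith [hdiag i])
    have step2 : ∑ i, m * (1 - W i i) = m * ((n : ℝ) - ∑ i, W i i) := by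
      rw [← Finset.mul_sum]
      congr 1
      rw [Finset.sum_sub_distrib]
      simp [Finset.card_univ]
    have step3 : 2 * m ≤ m * ((n : ℝ) - ∑ i, W i i) := by
      have : (2 : ℝ) ≤ (n : ℝ) - ∑ i, W i i := by linarith
      nlinarith
    linarith
  have expand2 : ∑ i, σ i * (1 - W i i) = (∑ i, σ i) - ∑ i, σ i * W i i := by
    rw [← Finset.sum_sub_distrib]
    exact Finset.sum_congr rfl fun i _ => by ring
  linarith [key, expand2.symm.le]

section Helpers

variable {U V : Type*} [NormedAddCommGroup U] [InnerProductSpace ℝ U]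
  [NormedAddCommGroup V] [InnerProductSpace ℝ V] {n : ℕ}

/-- Parseval-type identity for real inner products. -/
lemma parseval_mul (b : OrthonormalBasis (Fin n) ℝ U) (x y : U) :
    ∑ i, ⟪x, b i⟫ * ⟪y, b i⟫ = ⟪x, y⟫ := by
  have h := b.sum_inner_mul_inner x y
  rw [← h]
  exact Finset.sum_congr rfl fun i _ => by rw [real_inner_comm (b i) y]

/-- Expansion of `⟪T x, y⟫` through a singular-value-type decomposition. -/
lemma inner_map_expand (T : U →ₗ[ℝ] V) (e : OrthonormalBasis (Fin n) ℝ U)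
    (f : OrthonormalBasis (Fin n) ℝ V) (σ : Fin n → ℝ)
    (hTe : ∀ i, T (e i) = σ i • f i) (x : U) (y : V) :
    ⟪T x, y⟫ = ∑ j, σ j * (⟪e j, x⟫ * ⟪f j, y⟫) := by
  conv_lhs => rw [← e.sum_repr' x]
  rw [map_sum, sum_inner]
  exact Finset.sum_congr rfl fun j _ => by
    rw [_root_.map_smul, hTe j, real_inner_smul_left, real_inner_smul_left]; ring

/-- Bound for the trace-norm-type sums: any sum `∑ |⟪T b_i, c_i⟫|` is at most the
sum of the singular values. -/
lemma sum_abs_inner_le (T : U →ₗ[ℝ] V) (e : OrthonormalBasis (Fin n) ℝ U)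
    (f : OrthonormalBasis (Fin n) ℝ V) (σ : Fin n → ℝ) (hσ : ∀ i, 0 ≤ σ i)
    (hTe : ∀ i, T (e i) = σ i • f i)
    (b : OrthonormalBasis (Fin n) ℝ U) (c : OrthonormalBasis (Fin n) ℝ V) :
    ∑ i, |⟪T (b i), c i⟫| ≤ ∑ j, σ j := by
  have step1 : ∀ i, |⟪T (b i), c i⟫| ≤ ∑ j, σ j * (|⟪e j, b i⟫| * |⟪f j, c i⟫|) := by
    intro i
    rw [inner_map_expand T e f σ hTe]
    refine (Finset.abs_sum_le_sum_abs _ _).trans ?_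
    refine Finset.sum_le_sum fun j _ => ?_
    rw [abs_mul, abs_mul, abs_of_nonneg (hσ j)]
  calc ∑ i, |⟪T (b i), c i⟫| ≤ ∑ i, ∑ j, σ j * (|⟪e j, b i⟫| * |⟪f j, c i⟫|) :=
        Finset.sum_le_sum fun i _ => step1 i
    _ = ∑ j, σ j * ∑ i, |⟪e j, b i⟫| * |⟪f j, c i⟫| := by
        rw [Finset.sum_comm]
        exact Finset.sum_congr rfl fun j _ => by rw [Finset.mul_sum]
    _ ≤ ∑ j, σ j * 1 := by
        refine Finset.sum_le_sum fun j _ => mul_le_mul_of_nonneg_left ?_ (hσ j)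
        have hb : ∑ i, ⟪e j, b i⟫ ^ 2 = 1 := by
          have h := parseval_mul b (e j) (e j)
          simp only [← pow_two] at h
          rw [h, real_inner_self_eq_norm_sq, e.orthonormal.1 j, one_pow]
        have hc : ∑ i, ⟪f j, c i⟫ ^ 2 = 1 := by
          have h := parseval_mul c (f j) (f j)
          simp only [← pow_two] at h
          rw [h, real_inner_self_eq_norm_sq, f.orthonormal.1 j, one_pow]
        have hcs := Finset.sum_mul_sq_le_sq_mul_sq Finset.univ
          (fun i => |⟪e j, b i⟫|) (fun i => |⟪f j, c i⟫|)
        simp only [sq_abs] at hcs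
        rw [hb, hc, mul_one] at hcs
        have hnn : 0 ≤ ∑ i, |⟪e j, b i⟫| * |⟪f j, c i⟫| :=
          Finset.sum_nonneg fun i _ => mul_nonneg (abs_nonneg _) (abs_nonneg _)
        nlinarith
    _ = ∑ j, σ j := by simp

end Helpers

lemma map_orientation_eq_iff {U V : Type*} [AddCommGroup U] [Module ℝ U]
    [AddCommGroup V] [Module ℝ V] {n : ℕ} (φ : U ≃ₗ[ℝ] V)
    (b b' : Module.Basis (Fin n) ℝ U) :
    (b.map φ).orientation = (b'.map φ).orientation ↔ b.orientation = b'.orientation := by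
  rw [Module.Basis.orientation_eq_iff_det_pos, Module.Basis.orientation_eq_iff_det_pos]
  have hdet : (b.map φ).det ⇑(b'.map φ) = b.det ⇑b' := by
    rw [Module.Basis.det_map]
    congr 1
    funext i
    simp [Module.Basis.map_apply]
  rw [hdet]

/-- If `T` is invertible and its oriented trace equals its trace norm, then `T` is
orientation-preserving: it maps every positively oriented basis of `U` to a
positively oriented basis of `V`. -/
theorem orientationPreserving_of_orientedTrace_eq_traceNorm {U V : Type*}
    [NormedAddCommGroup U] [InnerProductSpace ℝ U]
    [NormedAddCommGroup V] [InnerProductSpace ℝ V]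
    [FiniteDimensional ℝ U] [FiniteDimensional ℝ V]
    (n : ℕ) (hn : 2 ≤ n) (hU : Module.finrank ℝ U = n) (hV : Module.finrank ℝ V = n)
    (oU : Orientation ℝ U (Fin n)) (oV : Orientation ℝ V (Fin n)) (T : U →ₗ[ℝ] V)
    (hT : Function.Bijective T)
    (h : orientedTrace n oU oV T = traceNorm n T) :
    ∀ b : Module.Basis (Fin n) ℝ U, b.orientation = oU →
      (b.map (LinearEquiv.ofBijective T hT)).orientation = oV := by
  classical
  intro b₀ hb₀
  by_contra hC
  haveI : Nonempty (Fin n) := ⟨⟨0, by omega⟩⟩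
  set φ := LinearEquiv.ofBijective T hT with hφdef
  have hφap : ∀ x, φ x = T x := fun x => rfl
  have hC' : (b₀.map φ).orientation = -oV := by
    rcases (b₀.map φ).orientation_eq_or_eq_neg oV with h1 | h1
    · exact absurd h1.symm hC
    · rw [h1]; exact (neg_neg ((b₀.map φ).orientation)).symm
  -- spectral decomposition of `adjoint T * T`
  have hS : (LinearMap.adjoint T ∘ₗ T).IsSymmetric := by
    intro x y
    rw [LinearMap.comp_apply, LinearMap.comp_apply, LinearMap.adjoint_inner_left,
      LinearMap.adjoint_inner_right]
  set e := hS.eigenvectorBasis hU with he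
  set μ := hS.eigenvalues hU with hμ
  have hSe : ∀ i, (LinearMap.adjoint T ∘ₗ T) (e i) = μ i • e i := by
    intro i
    have := hS.apply_eigenvectorBasis hU i
    simpa [he, hμ] using this
  have hite : ∀ i j, ⟪T (e i), T (e j)⟫ = if i = j then μ i else 0 := by
    intro i j
    have h1 : ⟪(LinearMap.adjoint T ∘ₗ T) (e i), e j⟫ = ⟪T (e i), T (e j)⟫ := by
      rw [LinearMap.comp_apply, LinearMap.adjoint_inner_left]
    rw [← h1, hSe i, real_inner_smul_left, orthonormal_iff_ite.mp e.orthonormal]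
    split <;> simp
  have hμpos : ∀ i, 0 < μ i := by
    intro i
    have h1 : ⟪T (e i), T (e i)⟫ = μ i := by rw [hite]; simp
    have h2 : T (e i) ≠ 0 := by
      intro h0
      have h3 : e i = (0 : U) := by
        apply hT.injective
        rw [h0, map_zero]
      exact e.toBasis.ne_zero i (by rwa [OrthonormalBasis.coe_toBasis])
    rw [← h1, real_inner_self_eq_norm_sq]
    have h4 : 0 < ‖T (e i)‖ := norm_pos_iff.mpr h2
    positivity
  set σ : Fin n → ℝ := fun i => Real.sqrt (μ i) with hσdef
  have hσpos : ∀ i, 0 < σ i := fun i => Real.sqrt_pos.mpr (hμpos i)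
  have hσsq : ∀ i, σ i * σ i = μ i := fun i => Real.mul_self_sqrt (hμpos i).le
  -- construction of the orthonormal basis of left singular vectors
  have hfon : Orthonormal ℝ (fun i => (σ i)⁻¹ • T (e i)) := by
    rw [orthonormal_iff_ite]
    intro i j
    rw [real_inner_smul_left, real_inner_smul_right, hite]
    split
    · rename_i hij
      subst hij
      rw [← hσsq i]
      field_simp
      rw [div_self (hσpos i).ne']
    · simp
  have hfsp : ⊤ ≤ Submodule.span ℝ (Set.range fun i => (σ i)⁻¹ • T (e i)) :=
    (hfon.linearIndependent.span_eq_top_of_card_eq_finrank (by simp [hV])).ge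
  set f : OrthonormalBasis (Fin n) ℝ V := OrthonormalBasis.mk hfon hfsp with hfdef
  have hfap : ∀ i, f i = (σ i)⁻¹ • T (e i) := fun i => by
    rw [hfdef]; exact congrFun (OrthonormalBasis.coe_mk hfon hfsp) i
  have hTe : ∀ i, T (e i) = σ i • f i := by
    intro i
    rw [hfap i, smul_smul, mul_inv_cancel₀ (hσpos i).ne', one_smul]
  -- the image of the `e` basis has the orientation of `f`
  have hmapE : (e.toBasis.map φ).orientation = f.toBasis.orientation := by
    symm
    rw [Module.Basis.orientation_eq_iff_det_pos]
    have hcoe : ⇑(e.toBasis.map φ) =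
        ⇑(f.toBasis.unitsSMul fun i => Units.mk0 (σ i) (hσpos i).ne') := by
      funext i
      rw [Module.Basis.map_apply, Module.Basis.unitsSMul_apply]
      simp only [OrthonormalBasis.coe_toBasis]
      rw [hφap, hTe i]
      simp
    rw [hcoe, Module.Basis.det_unitsSMul_self]
    exact Finset.prod_pos fun i _ => hσpos i
  -- the sign of the product of the two change-of-basis determinants is negative
  have keySign : ∀ b : OrthonormalBasis (Fin n) ℝ U, b.toBasis.orientation = oU →
      ∀ c : OrthonormalBasis (Fin n) ℝ V, c.toBasis.orientation = oV →
      e.toBasis.det ⇑b.toBasis * f.toBasis.det ⇑c.toBasis < 0 := by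
    intro b hb c hc
    have hbb₀ : b.toBasis.orientation = b₀.orientation := by rw [hb, hb₀]
    have hmapb : (b.toBasis.map φ).orientation = -oV := by
      rw [(map_orientation_eq_iff φ b.toBasis b₀).mpr hbb₀, hC']
    by_cases heU : e.toBasis.orientation = oU
    · have hdetP : 0 < e.toBasis.det ⇑b.toBasis :=
        (Module.Basis.orientation_eq_iff_det_pos e.toBasis b.toBasis).mp (by rw [heU, hb])
      have hfor : f.toBasis.orientation = -oV := by
        rw [← hmapE,
          (map_orientation_eq_iff φ e.toBasis b.toBasis).mpr (by rw [heU, hb]), hmapb]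
      have hfc : f.toBasis.orientation ≠ c.toBasis.orientation := by
        rw [hfor, hc]
        exact fun hcon => Module.Ray.ne_neg_self oV hcon.symm
      have hdetQ : f.toBasis.det ⇑c.toBasis < 0 := by
        rcases lt_trichotomy (f.toBasis.det ⇑c.toBasis) 0 with h1 | h1 | h1
        · exact h1
        · exact absurd h1.symm (f.toBasis.isUnit_det c.toBasis).ne_zero.symm
        · exact absurd ((Module.Basis.orientation_eq_iff_det_pos f.toBasis c.toBasis).mpr h1) hfc
      exact mul_neg_of_pos_of_neg hdetP hdetQ
    · have heb : e.toBasis.orientation ≠ b.toBasis.orientation := by rw [hb]; exact heU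
      have hdetP : e.toBasis.det ⇑b.toBasis < 0 := by
        rcases lt_trichotomy (e.toBasis.det ⇑b.toBasis) 0 with h1 | h1 | h1
        · exact h1
        · exact absurd h1.symm (e.toBasis.isUnit_det b.toBasis).ne_zero.symm
        · exact absurd ((Module.Basis.orientation_eq_iff_det_pos e.toBasis b.toBasis).mpr h1) heb
      have hfor : f.toBasis.orientation = oV := by
        have hne : f.toBasis.orientation ≠ -oV := by
          rw [← hmapE, ← hmapb]
          exact fun hcon => heb ((map_orientation_eq_iff φ e.toBasis b.toBasis).mp hcon)
        rcases f.toBasis.orientation_eq_or_eq_neg oV with h1 | h1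
        · exact h1.symm
        · exact absurd (by rw [h1]; exact (neg_neg (f.toBasis.orientation)).symm) hne
      have hdetQ : 0 < f.toBasis.det ⇑c.toBasis :=
        (Module.Basis.orientation_eq_iff_det_pos f.toBasis c.toBasis).mp (by rw [hfor, hc])
      exact mul_neg_of_neg_of_pos hdetP hdetQ
  -- the minimal singular value
  obtain ⟨i₀, -, hi₀⟩ := Finset.exists_min_image Finset.univ σ ⟨⟨0, by omega⟩, Finset.mem_univ _⟩
  set m := σ i₀ with hmdef
  have hm : 0 < m := hσpos i₀
  -- the key inequality for positively oriented orthonormal bases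
  have keyIneq : ∀ b : OrthonormalBasis (Fin n) ℝ U, b.toBasis.orientation = oU →
      ∀ c : OrthonormalBasis (Fin n) ℝ V, c.toBasis.orientation = oV →
      ∑ i, ⟪T (b i), c i⟫ ≤ (∑ j, σ j) - 2 * m := by
    intro b hb c hc
    set P : Matrix (Fin n) (Fin n) ℝ := e.toBasis.toMatrix ⇑b.toBasis with hP
    set Q : Matrix (Fin n) (Fin n) ℝ := f.toBasis.toMatrix ⇑c.toBasis with hQ
    have hPapp : ∀ j i, P j i = ⟪e j, b i⟫ := by
      intro j i
      rw [hP, Module.Basis.toMatrix_apply]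
      rw [show (⇑b.toBasis : Fin n → U) i = b i from congrFun b.coe_toBasis i]
      exact e.coe_toBasis_repr_apply (b i) j ▸ e.repr_apply_apply (b i) j
    have hQapp : ∀ j i, Q j i = ⟪f j, c i⟫ := by
      intro j i
      rw [hQ, Module.Basis.toMatrix_apply]
      rw [show (⇑c.toBasis : Fin n → V) i = c i from congrFun c.coe_toBasis i]
      exact f.coe_toBasis_repr_apply (c i) j ▸ f.repr_apply_apply (c i) j
    have hPP : P * Pᵀ = 1 := by
      ext j k
      rw [Matrix.mul_apply]
      simp only [Matrix.transpose_apply, hPapp]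
      rw [parseval_mul b (e j) (e k), orthonormal_iff_ite.mp e.orthonormal, Matrix.one_apply]
    have hQQ : Q * Qᵀ = 1 := by
      ext j k
      rw [Matrix.mul_apply]
      simp only [Matrix.transpose_apply, hQapp]
      rw [parseval_mul c (f j) (f k), orthonormal_iff_ite.mp f.orthonormal, Matrix.one_apply]
    set W : Matrix (Fin n) (Fin n) ℝ := P * Qᵀ with hW
    have hWWT : W * Wᵀ = 1 := by
      rw [hW, Matrix.transpose_mul, Matrix.transpose_transpose, Matrix.mul_assoc,
        ← Matrix.mul_assoc Qᵀ, mul_eq_one_comm.mp hQQ, Matrix.one_mul, hPP]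
    have hdetW : W.det < 0 := by
      rw [hW, Matrix.det_mul, Matrix.det_transpose]
      have h1 : P.det = e.toBasis.det ⇑b.toBasis := by rw [hP, Module.Basis.det_apply]
      have h2 : Q.det = f.toBasis.det ⇑c.toBasis := by rw [hQ, Module.Basis.det_apply]
      rw [h1, h2]
      exact keySign b hb c hc
    have hsum : ∑ i, ⟪T (b i), c i⟫ = ∑ j, σ j * W j j := by
      rw [Finset.sum_congr rfl fun i (_ : i ∈ Finset.univ) =>
        inner_map_expand T e f σ hTe (b i) (c i), Finset.sum_comm]
      refine Finset.sum_congr rfl fun j _ => ?_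
      have hWjj : W j j = ∑ i, ⟪e j, b i⟫ * ⟪f j, c i⟫ := by
        rw [hW, Matrix.mul_apply]
        exact Finset.sum_congr rfl fun i _ => by rw [Matrix.transpose_apply, hPapp, hQapp]
      rw [hWjj, Finset.mul_sum]
    rw [hsum]
    exact weighted_trace_bound hn W hWWT hdetW σ m hm.le fun i => hi₀ i (Finset.mem_univ i)
  -- bound the oriented trace
  have hnn : 0 ≤ (∑ j, σ j) - 2 * m := by
    have h1 : (∑ j : Fin n, m) ≤ ∑ j, σ j :=
      Finset.sum_le_sum fun j _ => hi₀ j (Finset.mem_univ j)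
    have h2 : (∑ _j : Fin n, m) = n * m := by
      rw [Finset.sum_const, Finset.card_univ, Fintype.card_fin, nsmul_eq_mul]
    have h3 : (2 : ℝ) * m ≤ n * m := by
      have hn' : (2 : ℝ) ≤ n := by exact_mod_cast hn
      nlinarith
    rw [h2] at h1
    linarith
  have hOT : orientedTrace n oU oV T ≤ (∑ j, σ j) - 2 * m := by
    rw [orientedTrace]
    exact Real.iSup_le
      (fun bb => Real.iSup_le (fun cc => keyIneq bb.val bb.prop cc.val cc.prop) hnn) hnn
  -- lower bound for the trace norm
  have hTN : (∑ j, σ j) ≤ traceNorm n T := by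
    rw [traceNorm]
    have hval : ∑ i, |⟪T (e i), f i⟫| = ∑ j, σ j := by
      refine Finset.sum_congr rfl fun i _ => ?_
      rw [hTe i, real_inner_smul_left]
      have h1 : ⟪(f i : V), f i⟫ = 1 := by
        rw [real_inner_self_eq_norm_sq, f.orthonormal.1 i, one_pow]
      rw [h1, mul_one, abs_of_nonneg (hσpos i).le]
    have hbdd : ∀ b : OrthonormalBasis (Fin n) ℝ U,
        (⨆ c : OrthonormalBasis (Fin n) ℝ V, ∑ i, |⟪T (b i), c i⟫|) ≤ ∑ j, σ j :=
      fun b => Real.iSup_le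
        (fun c => sum_abs_inner_le T e f σ (fun i => (hσpos i).le) hTe b c)
        (Finset.sum_nonneg fun j _ => (hσpos j).le)
    have step1 : (∑ j, σ j) ≤ ⨆ c : OrthonormalBasis (Fin n) ℝ V, ∑ i, |⟪T (e i), c i⟫| := by
      rw [← hval]
      exact le_ciSup ⟨∑ j, σ j, by
        rintro x ⟨c, rfl⟩
        exact sum_abs_inner_le T e f σ (fun i => (hσpos i).le) hTe e c⟩ f
    refine step1.trans (le_ciSup (f := fun b : OrthonormalBasis (Fin n) ℝ U =>
      ⨆ c : OrthonormalBasis (Fin n) ℝ V, ∑ i, |⟪T (b i), c i⟫|) ⟨∑ j, σ j, ?_⟩ e)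
    rintro x ⟨b, rfl⟩
    exact hbdd b
  rw [← h] at hTN
  linarith
end

section
/- Let U and V be oriented real inner product spaces of the same finite dimension n ≥ 2, and let T : U → V be an invertible linear map that is orientation-preserving (i.e. T maps positively oriented bases of U to positively oriented bases of V). Then [T]_tr = ‖T‖_tr. -/
open scoped RealInnerProductSpace

/-- If `T` is invertible and orientation-preserving (it maps every positively
oriented basis of `U` to a positively oriented basis of `V`), then its oriented
trace equals its trace norm. -/
theorem orientedTrace_eq_traceNorm_of_orientationPreserving {U V : Type*}
    [NormedAddCommGroup U] [InnerProductSpace ℝ U]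
    [NormedAddCommGroup V] [InnerProductSpace ℝ V]
    [FiniteDimensional ℝ U] [FiniteDimensional ℝ V]
    (n : ℕ) (hn : 2 ≤ n) (hU : Module.finrank ℝ U = n) (hV : Module.finrank ℝ V = n)
    (oU : Orientation ℝ U (Fin n)) (oV : Orientation ℝ V (Fin n)) (T : U →ₗ[ℝ] V)
    (hT : Function.Bijective T)
    (h : ∀ b : Module.Basis (Fin n) ℝ U, b.orientation = oU →
      (b.map (LinearEquiv.ofBijective T hT)).orientation = oV) :
    orientedTrace n oU oV T = traceNorm n T := by
  classical
  have hn0 : 0 < n := lt_of_lt_of_le two_pos hn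
  haveI : Nonempty (Fin n) := ⟨⟨0, hn0⟩⟩
  -- the symmetric operator `T* T`
  set A : U →ₗ[ℝ] U := LinearMap.adjoint T ∘ₗ T with hA_def
  have hA : A.IsSymmetric := by
    intro x y
    simp [hA_def, LinearMap.adjoint_inner_left, LinearMap.adjoint_inner_right]
  -- eigenbasis, adjusted to the orientation `oU`
  obtain ⟨e₀, μ, he₀⟩ : ∃ (e₀ : OrthonormalBasis (Fin n) ℝ U) (μ : Fin n → ℝ),
      ∀ i, A (e₀ i) = μ i • e₀ i :=
    ⟨hA.eigenvectorBasis hU, hA.eigenvalues hU, fun i => by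
      have := hA.apply_eigenvectorBasis hU i
      exact_mod_cast this⟩
  set e : OrthonormalBasis (Fin n) ℝ U := e₀.adjustToOrientation oU with he_def
  have he_or : e.toBasis.orientation = oU := e₀.orientation_adjustToOrientation oU
  have hesign : ∀ i, e i = e₀ i ∨ e i = -e₀ i :=
    e₀.adjustToOrientation_apply_eq_or_eq_neg oU
  have hAe : ∀ i, A (e i) = μ i • e i := by
    intro i
    rcases hesign i with hi | hi <;> rw [hi] <;>
      simp [he₀ i, smul_neg]
  have key : ∀ (x : U) (i : Fin n), ⟪T x, T (e i)⟫ = μ i * ⟪x, e i⟫ := by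
    intro x i
    have h1 : ⟪T x, T (e i)⟫ = ⟪x, A (e i)⟫ := by
      simp [hA_def, LinearMap.adjoint_inner_right]
    rw [h1, hAe i, real_inner_smul_right]
  have heii : ∀ i : Fin n, ⟪e i, e i⟫ = 1 := by
    intro i
    rw [real_inner_self_eq_norm_sq, e.orthonormal.1 i]
    norm_num
  have hμpos : ∀ i, 0 < μ i := by
    intro i
    have h1 : ⟪T (e i), T (e i)⟫ = μ i := by rw [key, heii, mul_one]
    have hne : T (e i) ≠ 0 := by
      intro hx
      exact e.toBasis.ne_zero i (hT.injective (by simpa using hx))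
    have hnn : (0:ℝ) ≤ ⟪T (e i), T (e i)⟫ := real_inner_self_nonneg
    have hz : ⟪T (e i), T (e i)⟫ ≠ 0 := fun hz => hne (inner_self_eq_zero.mp hz)
    rw [h1] at hnn hz
    exact lt_of_le_of_ne hnn (Ne.symm hz)
  set σ : Fin n → ℝ := fun i => Real.sqrt (μ i) with hσ_def
  have hσpos : ∀ i, 0 < σ i := fun i => Real.sqrt_pos.2 (hμpos i)
  have hσσ : ∀ i, σ i * σ i = μ i := fun i => Real.mul_self_sqrt (hμpos i).le
  -- the image orthonormal family
  set f₀ : Fin n → V := fun i => (σ i)⁻¹ • T (e i) with hf₀_def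
  have hinner_f₀ : ∀ i j, ⟪f₀ i, f₀ j⟫ = if i = j then 1 else 0 := by
    intro i j
    have heij : ⟪e i, e j⟫ = if i = j then 1 else 0 :=
      orthonormal_iff_ite.mp e.orthonormal i j
    rw [hf₀_def]
    simp only [real_inner_smul_left, real_inner_smul_right, key, heij]
    by_cases hij : i = j
    · subst hij
      simp only [if_pos rfl, mul_one]
      have hne0 : σ i ≠ 0 := (hσpos i).ne'
      rw [← hσσ i]
      field_simp
    · simp [hij]
  have horth : Orthonormal ℝ f₀ := orthonormal_iff_ite.mpr hinner_f₀
  have hcard : Fintype.card (Fin n) = Module.finrank ℝ V := by simp [hV]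
  set fb : Module.Basis (Fin n) ℝ V := basisOfOrthonormalOfCardEqFinrank horth hcard with hfb_def
  have hfb : ∀ i, fb i = f₀ i := by
    intro i
    rw [hfb_def]
    exact congrFun (coe_basisOfOrthonormalOfCardEqFinrank horth hcard) i
  have horth' : Orthonormal ℝ (⇑fb) := by
    rw [hfb_def, coe_basisOfOrthonormalOfCardEqFinrank]
    exact horth
  set f : OrthonormalBasis (Fin n) ℝ V := fb.toOrthonormalBasis horth' with hf_def
  have hf : ∀ i, f i = f₀ i := by
    intro i
    rw [hf_def, Module.Basis.coe_toOrthonormalBasis]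
    exact hfb i
  have hTf : ∀ i, T (e i) = σ i • f i := by
    intro i
    rw [hf i, hf₀_def]
    rw [smul_inv_smul₀ (hσpos i).ne']
  have hfii : ∀ i : Fin n, ⟪f i, f i⟫ = 1 := by
    intro i
    rw [hf i]
    simpa using hinner_f₀ i i
  -- orientation of `f`
  have hf_or : f.toBasis.orientation = oV := by
    have hg := h e.toBasis he_or
    rw [← hg, Module.Basis.orientation_eq_iff_det_pos, Module.Basis.det_apply]
    have hmat : f.toBasis.toMatrix (⇑(e.toBasis.map (LinearEquiv.ofBijective T hT))) =
        Matrix.diagonal σ := by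
      ext i j
      rw [Module.Basis.toMatrix_apply, Module.Basis.map_apply]
      have : (LinearEquiv.ofBijective T hT) (e.toBasis j) = σ j • f j := by
        simpa using hTf j
      rw [this, map_smul]
      have hrep : f.toBasis.repr (f j) = Finsupp.single j 1 := by
        have : f.toBasis j = f j := f.coe_toBasis ▸ rfl
        rw [← this, Module.Basis.repr_self]
      rw [hrep]
      rcases eq_or_ne j i with hij | hij
      · subst hij
        simp [Matrix.diagonal_apply]
      · simp [Matrix.diagonal_apply, Finsupp.single_apply, hij, Ne.symm hij]
    rw [hmat, Matrix.det_diagonal]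
    exact Finset.prod_pos fun i _ => hσpos i
  -- the common value
  set M : ℝ := ∑ i, σ i with hM_def
  -- the upper bound for arbitrary orthonormal bases
  have upper : ∀ (b : OrthonormalBasis (Fin n) ℝ U) (c : OrthonormalBasis (Fin n) ℝ V),
      ∑ i, |⟪T (b i), c i⟫| ≤ M := by
    intro b c
    have hexp : ∀ i : Fin n, ⟪T (b i), c i⟫ = ∑ k, ⟪e k, b i⟫ * (σ k * ⟪f k, c i⟫) := by
      intro i
      conv_lhs => rw [← e.sum_repr' (b i)]
      rw [map_sum, sum_inner]
      refine Finset.sum_congr rfl fun k _ => ?_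
      rw [map_smul, hTf k, smul_smul, real_inner_smul_left]
      ring
    have cauchy : ∀ k : Fin n, ∑ i, |⟪e k, b i⟫| * |⟪f k, c i⟫| ≤ 1 := by
      intro k
      have h1 : ∑ i, |⟪e k, b i⟫| ^ 2 = 1 := by
        have := b.sum_inner_mul_inner (e k) (e k)
        rw [heii k] at this
        calc ∑ i, |⟪e k, b i⟫| ^ 2 = ∑ i, ⟪e k, b i⟫ * ⟪b i, e k⟫ := by
              refine Finset.sum_congr rfl fun i _ => ?_
              rw [sq_abs, real_inner_comm (b i) (e k)]
              ring
          _ = 1 := this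
      have h2 : ∑ i, |⟪f k, c i⟫| ^ 2 = 1 := by
        have := c.sum_inner_mul_inner (f k) (f k)
        rw [hfii k] at this
        calc ∑ i, |⟪f k, c i⟫| ^ 2 = ∑ i, ⟪f k, c i⟫ * ⟪c i, f k⟫ := by
              refine Finset.sum_congr rfl fun i _ => ?_
              rw [sq_abs, real_inner_comm (c i) (f k)]
              ring
          _ = 1 := this
      have hcs := Finset.sum_mul_sq_le_sq_mul_sq Finset.univ
        (fun i => |⟪e k, b i⟫|) (fun i => |⟪f k, c i⟫|)
      rw [h1, h2, mul_one] at hcs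
      have hnonneg : 0 ≤ ∑ i, |⟪e k, b i⟫| * |⟪f k, c i⟫| :=
        Finset.sum_nonneg fun i _ => mul_nonneg (abs_nonneg _) (abs_nonneg _)
      nlinarith
    calc ∑ i, |⟪T (b i), c i⟫|
        ≤ ∑ i, ∑ k, σ k * (|⟪e k, b i⟫| * |⟪f k, c i⟫|) := by
          refine Finset.sum_le_sum fun i _ => ?_
          rw [hexp i]
          refine (Finset.abs_sum_le_sum_abs _ _).trans ?_
          refine Finset.sum_le_sum fun k _ => ?_
          rw [abs_mul, abs_mul, abs_of_pos (hσpos k)]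
          exact le_of_eq (by ring)
      _ = ∑ k, σ k * ∑ i, |⟪e k, b i⟫| * |⟪f k, c i⟫| := by
          rw [Finset.sum_comm]
          exact Finset.sum_congr rfl fun k _ => by rw [Finset.mul_sum]
      _ ≤ ∑ k, σ k * 1 := by
          refine Finset.sum_le_sum fun k _ => ?_
          exact mul_le_mul_of_nonneg_left (cauchy k) (hσpos k).le
      _ = M := by simp [hM_def]
  -- the value attained at `(e, f)`
  have hvalue : ∑ i, ⟪T (e i), f i⟫ = M := by
    refine Finset.sum_congr rfl fun i _ => ?_
    rw [hTf i, real_inner_smul_left, hfii i, mul_one]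
  -- nonemptiness of the index types
  haveI hne_bU : Nonempty {b : OrthonormalBasis (Fin n) ℝ U // b.toBasis.orientation = oU} :=
    ⟨⟨e, he_or⟩⟩
  haveI hne_bV : Nonempty {c : OrthonormalBasis (Fin n) ℝ V // c.toBasis.orientation = oV} :=
    ⟨⟨f, hf_or⟩⟩
  haveI hne_U : Nonempty (OrthonormalBasis (Fin n) ℝ U) := ⟨e⟩
  haveI hne_V : Nonempty (OrthonormalBasis (Fin n) ℝ V) := ⟨f⟩
  -- compute both suprema
  have hOT : orientedTrace n oU oV T = M := by
    rw [orientedTrace]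
    have hub : ∀ (b : {b : OrthonormalBasis (Fin n) ℝ U // b.toBasis.orientation = oU})
        (c : {c : OrthonormalBasis (Fin n) ℝ V // c.toBasis.orientation = oV}),
        ∑ i, ⟪T (b.val i), c.val i⟫ ≤ M := by
      intro b c
      refine le_trans (Finset.sum_le_sum fun i _ => le_abs_self _) (upper b.val c.val)
    have hbd1 : ∀ b : {b : OrthonormalBasis (Fin n) ℝ U // b.toBasis.orientation = oU},
        BddAbove (Set.range fun c : {c : OrthonormalBasis (Fin n) ℝ V //
          c.toBasis.orientation = oV} => ∑ i, ⟪T (b.val i), c.val i⟫) := by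
      intro b
      exact ⟨M, by rintro x ⟨c, rfl⟩; exact hub b c⟩
    refine le_antisymm (ciSup_le fun b => ciSup_le fun c => hub b c) ?_
    have hstep1 : M ≤ ⨆ c : {c : OrthonormalBasis (Fin n) ℝ V // c.toBasis.orientation = oV},
        ∑ i, ⟪T ((⟨e, he_or⟩ : {b : OrthonormalBasis (Fin n) ℝ U //
          b.toBasis.orientation = oU}).val i), c.val i⟫ := by
      refine le_trans (le_of_eq hvalue.symm) ?_
      exact le_ciSup (hbd1 ⟨e, he_or⟩) ⟨f, hf_or⟩
    refine le_trans hstep1 ?_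
    have hbd2 : BddAbove (Set.range fun b : {b : OrthonormalBasis (Fin n) ℝ U //
        b.toBasis.orientation = oU} => ⨆ c : {c : OrthonormalBasis (Fin n) ℝ V //
          c.toBasis.orientation = oV}, ∑ i, ⟪T (b.val i), c.val i⟫) := by
      exact ⟨M, by rintro x ⟨b, rfl⟩; exact ciSup_le fun c => hub b c⟩
    exact le_ciSup hbd2 ⟨e, he_or⟩
  have hTN : traceNorm n T = M := by
    rw [traceNorm]
    have hbd1 : ∀ b : OrthonormalBasis (Fin n) ℝ U,
        BddAbove (Set.range fun c : OrthonormalBasis (Fin n) ℝ V =>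
          ∑ i, |⟪T (b i), c i⟫|) := by
      intro b
      exact ⟨M, by rintro x ⟨c, rfl⟩; exact upper b c⟩
    refine le_antisymm (ciSup_le fun b => ciSup_le fun c => upper b c) ?_
    have hMval : M = ∑ i, |⟪T (e i), f i⟫| := by
      rw [← hvalue]
      refine Finset.sum_congr rfl fun i _ => ?_
      rw [hTf i, real_inner_smul_left, hfii i, mul_one, abs_of_pos (hσpos i)]
    have hstep1 : M ≤ ⨆ c : OrthonormalBasis (Fin n) ℝ V, ∑ i, |⟪T (e i), c i⟫| := by
      refine le_trans (le_of_eq hMval) ?_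
      exact le_ciSup (hbd1 e) f
    refine le_trans hstep1 ?_
    have hbd2 : BddAbove (Set.range fun b : OrthonormalBasis (Fin n) ℝ U =>
        ⨆ c : OrthonormalBasis (Fin n) ℝ V, ∑ i, |⟪T (b i), c i⟫|) := by
      exact ⟨M, by rintro x ⟨b, rfl⟩; exact ciSup_le fun c => upper b c⟩
    exact le_ciSup hbd2 e
  rw [hOT, hTN]
end

section
/- Let U and V be real inner product spaces of the same finite dimension n ≥ 2, let T : U → V be a linear map, and let u ∈ U and w ∈ V be unit vectors. Let P denote the orthogonal projection of V onto the orthogonal complement (span w)ᗮ, and let T′ : (span u)ᗮ → (span w)ᗮ be the linear map obtained by restricting P ∘ T to (span u)ᗮ. Then ‖T′‖_tr + |⟨T u, w⟩| ≤ ‖T‖_tr, where the trace norms are taken between the (n−1)-dimensional inner product spaces (span u)ᗮ, (span w)ᗮ and between U, V respectively. -/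
open scoped RealInnerProductSpace

/-- Any one of the sums appearing in the definition of the trace norm is bounded by
`n` times the operator norm. -/
lemma sum_abs_inner_le_const {U V : Type*} [NormedAddCommGroup U] [InnerProductSpace ℝ U]
    [NormedAddCommGroup V] [InnerProductSpace ℝ V] [FiniteDimensional ℝ U]
    (n : ℕ) (T : U →ₗ[ℝ] V) (b : OrthonormalBasis (Fin n) ℝ U)
    (c : OrthonormalBasis (Fin n) ℝ V) :
    ∑ i, |⟪T (b i), c i⟫| ≤ n * ‖LinearMap.toContinuousLinearMap T‖ := by
  calc ∑ i, |⟪T (b i), c i⟫|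
      ≤ ∑ _i : Fin n, ‖LinearMap.toContinuousLinearMap T‖ := by
        refine Finset.sum_le_sum fun i _ => ?_
        calc |⟪T (b i), c i⟫| ≤ ‖T (b i)‖ * ‖c i‖ := abs_real_inner_le_norm _ _
          _ = ‖LinearMap.toContinuousLinearMap T (b i)‖ := by
              rw [c.orthonormal.1 i, mul_one]; rfl
          _ ≤ ‖LinearMap.toContinuousLinearMap T‖ * ‖b i‖ :=
              (LinearMap.toContinuousLinearMap T).le_opNorm _
          _ = ‖LinearMap.toContinuousLinearMap T‖ := by rw [b.orthonormal.1 i, mul_one]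
    _ = n * ‖LinearMap.toContinuousLinearMap T‖ := by simp [Finset.sum_const]

lemma sum_abs_inner_le_traceNorm {U V : Type*} [NormedAddCommGroup U] [InnerProductSpace ℝ U]
    [NormedAddCommGroup V] [InnerProductSpace ℝ V] [FiniteDimensional ℝ U]
    (n : ℕ) (T : U →ₗ[ℝ] V) (b : OrthonormalBasis (Fin n) ℝ U)
    (c : OrthonormalBasis (Fin n) ℝ V) :
    ∑ i, |⟪T (b i), c i⟫| ≤ traceNorm n T := by
  have h1 : ∀ b' : OrthonormalBasis (Fin n) ℝ U,
      BddAbove (Set.range fun c' : OrthonormalBasis (Fin n) ℝ V => ∑ i, |⟪T (b' i), c' i⟫|) := by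
    intro b'
    refine ⟨n * ‖LinearMap.toContinuousLinearMap T‖, ?_⟩
    rintro x ⟨c', rfl⟩
    exact sum_abs_inner_le_const n T b' c'
  have h2 : BddAbove (Set.range fun b' : OrthonormalBasis (Fin n) ℝ U =>
      ⨆ c' : OrthonormalBasis (Fin n) ℝ V, ∑ i, |⟪T (b' i), c' i⟫|) := by
    refine ⟨n * ‖LinearMap.toContinuousLinearMap T‖, ?_⟩
    rintro x ⟨b', rfl⟩
    exact Real.iSup_le (fun c' => sum_abs_inner_le_const n T b' c')
      (by positivity)
  calc ∑ i, |⟪T (b i), c i⟫|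
      ≤ ⨆ c' : OrthonormalBasis (Fin n) ℝ V, ∑ i, |⟪T (b i), c' i⟫| := le_ciSup (h1 b) c
    _ ≤ traceNorm n T := le_ciSup h2 b

/-- Projecting a linear map to the orthogonal complements of unit vectors `u` and `w`
loses at least `|⟪T u, w⟫|` of the trace norm:
`‖P ∘ T|_{(span u)ᗮ}‖_tr + |⟪T u, w⟫| ≤ ‖T‖_tr`. -/
theorem traceNorm_projection_add_le {U V : Type*}
    [NormedAddCommGroup U] [InnerProductSpace ℝ U]
    [NormedAddCommGroup V] [InnerProductSpace ℝ V]
    [FiniteDimensional ℝ U] [FiniteDimensional ℝ V]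
    (n : ℕ) (hn : 2 ≤ n) (hU : Module.finrank ℝ U = n) (hV : Module.finrank ℝ V = n)
    (T : U →ₗ[ℝ] V) (u : U) (w : V) (hu : ‖u‖ = 1) (hw : ‖w‖ = 1) :
    traceNorm (n - 1)
        (((Submodule.orthogonalProjectionOnto ((ℝ ∙ w)ᗮ)).toLinearMap.comp T).comp ((ℝ ∙ u)ᗮ).subtype)
      + |⟪T u, w⟫| ≤ traceNorm n T := by
  obtain ⟨m, rfl⟩ : ∃ m, n = m + 1 := ⟨n - 1, by omega⟩
  have hm : m + 1 - 1 = m := rfl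
  rw [hm]
  set T' := (((Submodule.orthogonalProjectionOnto ((ℝ ∙ w)ᗮ)).toLinearMap.comp T).comp ((ℝ ∙ u)ᗮ).subtype)
    with hT'
  have hu0 : u ≠ 0 := fun h => by simp [h] at hu
  have hw0 : w ≠ 0 := fun h => by simp [h] at hw
  -- finrank of the orthogonal complements
  have hfu : Module.finrank ℝ ((ℝ ∙ u)ᗮ : Submodule ℝ U) = m := by
    have := Submodule.finrank_add_finrank_orthogonal (K := (ℝ ∙ u))
    rw [finrank_span_singleton hu0, hU] at this
    omega
  have hfw : Module.finrank ℝ ((ℝ ∙ w)ᗮ : Submodule ℝ V) = m := by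
    have := Submodule.finrank_add_finrank_orthogonal (K := (ℝ ∙ w))
    rw [finrank_span_singleton hw0, hV] at this
    omega
  haveI : Nonempty (OrthonormalBasis (Fin m) ℝ ((ℝ ∙ u)ᗮ : Submodule ℝ U)) :=
    ⟨(stdOrthonormalBasis ℝ _).reindex (finCongr hfu)⟩
  haveI : Nonempty (OrthonormalBasis (Fin m) ℝ ((ℝ ∙ w)ᗮ : Submodule ℝ V)) :=
    ⟨(stdOrthonormalBasis ℝ _).reindex (finCongr hfw)⟩
  rw [← le_sub_iff_add_le, traceNorm]
  refine ciSup_le fun b => ciSup_le fun c => ?_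
  rw [le_sub_iff_add_le]
  -- extend `b` to an orthonormal basis of `U` by appending `u`
  have hbu : ∀ i, ⟪u, ((b i : U))⟫ = 0 := fun i =>
    Submodule.mem_orthogonal_singleton_iff_inner_right.mp (b i).2
  have hcw : ∀ i, ⟪w, ((c i : V))⟫ = 0 := fun i =>
    Submodule.mem_orthogonal_singleton_iff_inner_right.mp (c i).2
  set f : Fin (m + 1) → U := Fin.snoc (fun i => (b i : U)) u with hf
  set g : Fin (m + 1) → V := Fin.snoc (fun i => (c i : V)) w with hg
  have hfo : Orthonormal ℝ f := by
    rw [orthonormal_iff_ite]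
    intro i j
    refine Fin.lastCases ?_ (fun i' => ?_) i <;> refine Fin.lastCases ?_ (fun j' => ?_) j
    · simp [hf, Fin.snoc_last, real_inner_self_eq_norm_sq, hu]
    · simp only [hf, Fin.snoc_last, Fin.snoc_castSucc]
      rw [hbu j']
      simp [(Fin.castSucc_lt_last j').ne']
    · simp only [hf, Fin.snoc_last, Fin.snoc_castSucc]
      rw [real_inner_comm, hbu i']
      simp [(Fin.castSucc_lt_last i').ne]
    · simp only [hf, Fin.snoc_castSucc]
      have := orthonormal_iff_ite.mp b.orthonormal i' j'
      rw [Submodule.coe_inner] at this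
      rw [this]
      simp [Fin.castSucc_inj]
  have hgo : Orthonormal ℝ g := by
    rw [orthonormal_iff_ite]
    intro i j
    refine Fin.lastCases ?_ (fun i' => ?_) i <;> refine Fin.lastCases ?_ (fun j' => ?_) j
    · simp [hg, Fin.snoc_last, real_inner_self_eq_norm_sq, hw]
    · simp only [hg, Fin.snoc_last, Fin.snoc_castSucc]
      rw [hcw j']
      simp [(Fin.castSucc_lt_last j').ne']
    · simp only [hg, Fin.snoc_last, Fin.snoc_castSucc]
      rw [real_inner_comm, hcw i']
      simp [(Fin.castSucc_lt_last i').ne]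
    · simp only [hg, Fin.snoc_castSucc]
      have := orthonormal_iff_ite.mp c.orthonormal i' j'
      rw [Submodule.coe_inner] at this
      rw [this]
      simp [Fin.castSucc_inj]
  have hcardU : Fintype.card (Fin (m + 1)) = Module.finrank ℝ U := by simp [hU]
  have hcardV : Fintype.card (Fin (m + 1)) = Module.finrank ℝ V := by simp [hV]
  set Bb : Module.Basis (Fin (m + 1)) ℝ U := basisOfOrthonormalOfCardEqFinrank hfo hcardU with hBb
  set Cb : Module.Basis (Fin (m + 1)) ℝ V := basisOfOrthonormalOfCardEqFinrank hgo hcardV with hCb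
  have hBbc : ⇑Bb = f := coe_basisOfOrthonormalOfCardEqFinrank hfo hcardU
  have hCbc : ⇑Cb = g := coe_basisOfOrthonormalOfCardEqFinrank hgo hcardV
  set B : OrthonormalBasis (Fin (m + 1)) ℝ U := Bb.toOrthonormalBasis (by rwa [hBbc])
  set C : OrthonormalBasis (Fin (m + 1)) ℝ V := Cb.toOrthonormalBasis (by rwa [hCbc])
  have hB : ∀ i, B i = f i := fun i => by
    simp only [B, Module.Basis.coe_toOrthonormalBasis, hBbc]
  have hC : ∀ i, C i = g i := fun i => by
    simp only [C, Module.Basis.coe_toOrthonormalBasis, hCbc]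
  have key : (∑ i, |⟪T' (b i), c i⟫|) + |⟪T u, w⟫| = ∑ i, |⟪T (B i), C i⟫| := by
    rw [Fin.sum_univ_castSucc (f := fun i => |⟪T (B i), C i⟫|)]
    congr 1
    · refine Finset.sum_congr rfl fun i _ => ?_
      have hTi : ⟪T' (b i), c i⟫ = ⟪T (b i : U), (c i : V)⟫ := by
        rw [hT']
        simp only [LinearMap.comp_apply, Submodule.subtype_apply,
          ContinuousLinearMap.coe_coe]
        rw [Submodule.coe_inner]
        have hz := Submodule.starProjection_inner_eq_zero (K := (ℝ ∙ w)ᗮ)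
          (T (b i : U)) (c i : V) (c i).2
        rw [inner_sub_left, sub_eq_zero] at hz
        exact hz.symm
      rw [hTi, hB, hC]
      simp [hf, hg, Fin.snoc_castSucc]
    · rw [hB, hC]
      simp [hf, hg, Fin.snoc_last]
  rw [key]
  exact sum_abs_inner_le_traceNorm (m + 1) T B C
end
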